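/- Let H(z) = z + \sum_{n=2}^{\infty} A_n z^n and G(z) = \sum_{n=2}^{\infty} B_n z^n be holomorphic on \mathbb{D} (so G'(0) = 0) with \sum_{n=2}^{\infty} n(2n-1)(|A_n| + |B_n|) \leq 1, and let a \geq 1. Define h_a(z) = (a H(z) + z H'(z))/(a+1) and g_a(z) = (a G(z) + z G'(z))/(a+1), whose Taylor coefficients are a'_n = \frac{a+n}{a+1} A_n and b'_n = \frac{a+n}{a+1} B_n. Then \sum_{n=2}^{\infty} n|a'_n| + \sum_{n=1}^{\infty} n|b'_n| \leq 1/2; consequently the harmonic function f_a = h_a + \overline{g_a} is uniformly starlike in \mathbb{D}. -/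

import Mathlib

open Complex Metric ComplexConjugate

noncomputable section

/-- The analytic condition (due to Kanas–Ponnusamy–Sairam) characterizing uniform
starlikeness used in the paper: `f = h + conj g` satisfies `f(0) = 0`, has positive
Jacobian, `Re {(f(z)-f(ζ)) / ((z-ζ) f_z(z) - conj(z-ζ) f_{z̄}(z))} ≥ 0` for `z ≠ ζ`
in `𝔻`, with strict inequality when `ζ = 0`.  We use it as our formal definition of
"uniformly starlike in `𝔻`". -/
def UniformlyStarlikeOnDisk (h g : ℂ → ℂ) : Prop :=
  (h 0 + conj (g 0) = 0) ∧
  (∀ z ∈ ball (0:ℂ) 1, ‖deriv g z‖ < ‖deriv h z‖) ∧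
  (∀ z ∈ ball (0:ℂ) 1, ∀ ζ ∈ ball (0:ℂ) 1, z ≠ ζ →
    0 ≤ (((h z + conj (g z)) - (h ζ + conj (g ζ)))
        / ((z - ζ) * deriv h z - conj (z - ζ) * conj (deriv g z))).re) ∧
  (∀ z ∈ ball (0:ℂ) 1, z ≠ 0 →
    0 < ((h z + conj (g z))
        / (z * deriv h z - conj z * conj (deriv g z))).re)


namespace BIUS2

open Filter Asymptotics Topology

variable {e : ℕ → ℂ}


lemma pow1 (w z : ℂ) {ρ : ℝ} (hw : ‖w‖ ≤ ρ) (hz : ‖z‖ ≤ ρ) :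
    ∀ k : ℕ, ‖w ^ k - z ^ k‖ ≤ k * ρ ^ (k - 1) * ‖w - z‖ := by
  have hρ : 0 ≤ ρ := le_trans (norm_nonneg w) hw
  intro k
  induction k with
  | zero => simp
  | succ k ih =>
    have key : w ^ (k+1) - z ^ (k+1) = w ^ k * (w - z) + (w ^ k - z ^ k) * z := by ring
    rw [key]
    have h1 : ‖w ^ k * (w - z)‖ ≤ ρ ^ k * ‖w - z‖ := by
      rw [norm_mul, norm_pow]; gcongr
    have h2 : ‖(w ^ k - z ^ k) * z‖ ≤ (k:ℝ) * ρ ^ k * ‖w - z‖ := by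
      rw [norm_mul]
      rcases Nat.eq_zero_or_pos k with hk | hk
      · subst hk; simp
      · have e : ρ ^ (k - 1) * ρ = ρ ^ k := by
          rw [← pow_succ]; congr 1; omega
        calc ‖w ^ k - z ^ k‖ * ‖z‖ ≤ ((k:ℝ) * ρ ^ (k-1) * ‖w - z‖) * ρ := by
              apply mul_le_mul ih hz (norm_nonneg z)
              positivity
          _ = (k:ℝ) * ρ ^ k * ‖w - z‖ := by rw [← e]; ring
    calc ‖w ^ k * (w - z) + (w ^ k - z ^ k) * z‖
        ≤ ‖w ^ k * (w - z)‖ + ‖(w ^ k - z ^ k) * z‖ := norm_add_le _ _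
      _ ≤ ρ ^ k * ‖w - z‖ + (k:ℝ) * ρ ^ k * ‖w - z‖ := add_le_add h1 h2
      _ = (k+1 : ℕ) * ρ ^ ((k+1) - 1) * ‖w - z‖ := by push_cast [Nat.add_sub_cancel]; ring

lemma pow2 (w z : ℂ) {ρ : ℝ} (hρ : 0 < ρ) (hw : ‖w‖ ≤ ρ) (hz : ‖z‖ ≤ ρ) (n : ℕ) :
    ‖w ^ n - z ^ n - n * z ^ (n - 1) * (w - z)‖
      ≤ ((n:ℝ)+1) ^ 2 * ρ ^ n / ρ ^ 2 * ‖w - z‖ ^ 2 := by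
  have hρ0 : (0:ℝ) ≤ ρ := hρ.le
  match n with
  | 0 => simp; positivity
  | 1 => simp; positivity
  | (m+2) =>
    have expand : w ^ (m+2) - z ^ (m+2) - ((m+2 : ℕ) : ℂ) * z ^ ((m+2) - 1) * (w - z)
        = (∑ k ∈ Finset.range (m+2), (w ^ k * z ^ (m+2-1-k) - z ^ (m+1))) * (w - z) := by
      rw [Finset.sum_sub_distrib, Finset.sum_const, Finset.card_range, sub_mul, geom_sum₂_mul]
      have e : (m+2-1 : ℕ) = m+1 := rfl
      rw [e]
      push_cast
      ring
    rw [expand, norm_mul]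
    have hterm : ∀ k ∈ Finset.range (m+2),
        ‖w ^ k * z ^ (m+2-1-k) - z ^ (m+1)‖ ≤ ((m:ℝ)+2) * ρ ^ m * ‖w - z‖ := by
      intro k hk
      rw [Finset.mem_range] at hk
      have e1 : k + (m+1-k) = m+1 := by omega
      have e2 : (m+2-1-k : ℕ) = m+1-k := by omega
      have e3 : w ^ k * z ^ (m+2-1-k) - z ^ (m+1) = (w ^ k - z ^ k) * z ^ (m+1-k) := by
        rw [e2, sub_mul, ← pow_add, e1]
      rw [e3, norm_mul, norm_pow]
      rcases Nat.eq_zero_or_pos k with hk0 | hk1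
      · subst hk0; simp; positivity
      · have e4 : ρ ^ (k-1) * ρ ^ (m+1-k) = ρ ^ m := by rw [← pow_add]; congr 1; omega
        calc ‖w ^ k - z ^ k‖ * ‖z‖ ^ (m+1-k)
            ≤ ((k:ℝ) * ρ ^ (k-1) * ‖w - z‖) * ρ ^ (m+1-k) := by
              apply mul_le_mul (pow1 w z hw hz k) (pow_le_pow_left₀ (norm_nonneg z) hz _)
                (by positivity) (by positivity)
          _ = (k:ℝ) * (ρ ^ (k-1) * ρ ^ (m+1-k)) * ‖w - z‖ := by ring
          _ = (k:ℝ) * ρ ^ m * ‖w - z‖ := by rw [e4]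
          _ ≤ ((m:ℝ)+2) * ρ ^ m * ‖w - z‖ := by
              have : (k:ℝ) ≤ (m:ℝ)+2 := by exact_mod_cast hk.le
              gcongr
    have hsum : ‖∑ k ∈ Finset.range (m+2), (w ^ k * z ^ (m+2-1-k) - z ^ (m+1))‖
        ≤ ((m:ℝ)+2) * (((m:ℝ)+2) * ρ ^ m * ‖w - z‖) := by
      calc ‖∑ k ∈ Finset.range (m+2), (w ^ k * z ^ (m+2-1-k) - z ^ (m+1))‖
          ≤ ∑ k ∈ Finset.range (m+2), ‖w ^ k * z ^ (m+2-1-k) - z ^ (m+1)‖ :=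
            norm_sum_le _ _
        _ ≤ ∑ _k ∈ Finset.range (m+2), ((m:ℝ)+2) * ρ ^ m * ‖w - z‖ :=
            Finset.sum_le_sum hterm
        _ = ((m:ℝ)+2) * (((m:ℝ)+2) * ρ ^ m * ‖w - z‖) := by
            rw [Finset.sum_const, Finset.card_range]; push_cast; ring
    have epow : ρ ^ (m+2) / ρ ^ 2 = ρ ^ m := by
      rw [pow_add]; field_simp
    calc ‖∑ k ∈ Finset.range (m+2), (w ^ k * z ^ (m+2-1-k) - z ^ (m+1))‖ * ‖w - z‖
        ≤ (((m:ℝ)+2) * (((m:ℝ)+2) * ρ ^ m * ‖w - z‖)) * ‖w - z‖ := by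
          apply mul_le_mul_of_nonneg_right hsum (norm_nonneg _)
      _ = ((m:ℝ)+2)^2 * ρ ^ m * ‖w - z‖^2 := by ring
      _ ≤ (((m+2 : ℕ):ℝ)+1) ^ 2 * ρ ^ (m+2) / ρ ^ 2 * ‖w - z‖ ^ 2 := by
          have e5 : (((m+2 : ℕ):ℝ)+1) ^ 2 * ρ ^ (m+2) / ρ ^ 2 * ‖w - z‖ ^ 2
              = ((m:ℝ)+3) ^ 2 * ρ ^ m * ‖w - z‖ ^ 2 := by
            rw [pow_add]; push_cast; field_simp; ring
          rw [e5]
          have ht : (0:ℝ) ≤ ρ ^ m * ‖w - z‖ ^ 2 := by positivity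
          have hm : (0:ℝ) ≤ (m:ℝ) := Nat.cast_nonneg m
          nlinarith [mul_nonneg ht hm, ht]

lemma summable_aux {c : ℕ → ℂ} (hs : Summable (fun n => ‖c n‖)) {z : ℂ} (hz : ‖z‖ ≤ 1) :
    Summable (fun n => c n * z ^ n) := by
  apply Summable.of_norm_bounded hs
  intro n
  rw [norm_mul, norm_pow]
  calc ‖c n‖ * ‖z‖ ^ n ≤ ‖c n‖ * 1 ^ n := by gcongr
    _ = ‖c n‖ := by ring

lemma summable_sq_geom {ρ : ℝ} (h0 : 0 ≤ ρ) (h1 : ρ < 1) :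
    Summable (fun n : ℕ => ((n:ℝ)+1) ^ 2 * ρ ^ n) := by
  have hρ : ‖ρ‖ < 1 := by rwa [Real.norm_eq_abs, _root_.abs_of_nonneg h0]
  have h2 := summable_pow_mul_geometric_of_norm_lt_one (R := ℝ) 2 hρ
  have hh1 := summable_pow_mul_geometric_of_norm_lt_one (R := ℝ) 1 hρ
  have hg := summable_geometric_of_norm_lt_one (x := ρ) hρ
  have := (h2.add ((hh1.mul_left 2).add hg))
  apply this.congr
  intro n
  push_cast
  ring

lemma hasDerivAt_tsum_pow (c : ℕ → ℂ) (hs : Summable (fun n => ‖c n‖)) {z : ℂ} (hz : ‖z‖ < 1) :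
    HasDerivAt (fun w => ∑' n, c n * w ^ n) (∑' n : ℕ, ((n:ℂ)+1) * c (n+1) * z ^ n) z := by
  set ρ : ℝ := (1 + ‖z‖) / 2 with hρdef
  have hρ0 : 0 < ρ := by positivity
  have hρ1 : ρ < 1 := by rw [hρdef]; linarith
  have hzρ : ‖z‖ < ρ := by rw [hρdef]; linarith
  set C : ℝ := ∑' n, ‖c n‖ with hCdef
  have hC : ∀ n, ‖c n‖ ≤ C := fun n => Summable.le_tsum hs n (fun m _ => norm_nonneg _)
  have hC0 : 0 ≤ C := le_trans (norm_nonneg _) (hC 0)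
  have hM : Summable (fun n : ℕ => ((n:ℝ)+1) ^ 2 * ρ ^ n) := summable_sq_geom hρ0.le hρ1
  set M : ℝ := ∑' n : ℕ, ((n:ℝ)+1) ^ 2 * ρ ^ n with hMdef
  set G : ℂ := ∑' n : ℕ, ((n:ℂ)+1) * c (n+1) * z ^ n with hGdef
  set F : ℂ → ℂ := fun w => ∑' n, c n * w ^ n with hFdef
  -- the key estimate
  have key : ∀ w : ℂ, ‖w‖ ≤ ρ → ‖F w - F z - (w - z) * G‖ ≤ C * M * (‖w - z‖ ^ 2 / ρ ^ 2) := by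
    intro w hw
    have hzρ' : ‖z‖ ≤ ρ := hzρ.le
    have hsw : Summable (fun n => c n * w ^ n) := summable_aux hs (hw.trans hρ1.le)
    have hsz : Summable (fun n => c n * z ^ n) := summable_aux hs (hzρ'.trans hρ1.le)
    set q : ℕ → ℂ := fun n => (n:ℂ) * c n * z ^ (n - 1) * (w - z) with hqdef
    have hqb : ∀ n, ‖q n‖ ≤ (C * ((n:ℝ)+1) ^ 2 * ρ ^ n) * (‖w - z‖ / ρ) := by
      intro n
      match n with
      | 0 => simp [hqdef]; positivity
      | (m+1) =>
        have eq1 : ‖q (m+1)‖ = ((m:ℝ)+1) * ‖c (m+1)‖ * ‖z‖ ^ m * ‖w - z‖ := by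
          simp only [hqdef, Nat.add_sub_cancel]
          rw [norm_mul, norm_mul, norm_mul, norm_pow, Complex.norm_natCast]
          push_cast
          ring
        rw [eq1]
        have h1 : ((m:ℝ)+1) * ‖c (m+1)‖ * ‖z‖ ^ m * ‖w - z‖
            ≤ ((m:ℝ)+1) * C * ρ ^ m * ‖w - z‖ := by
          gcongr <;> first | exact hC _ | exact hzρ'
        refine h1.trans ?_
        have e : (C * (((m+1:ℕ):ℝ)+1) ^ 2 * ρ ^ (m+1)) * (‖w - z‖ / ρ)
            = C * (((m:ℝ)+2) ^ 2) * ρ ^ m * ‖w - z‖ := by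
          push_cast
          rw [pow_succ]
          field_simp
          ring
        rw [e]
        have hm0 : (0:ℝ) ≤ (m:ℝ) := Nat.cast_nonneg m
        have ht : (0:ℝ) ≤ ρ ^ m * ‖w - z‖ := by positivity
        nlinarith [mul_nonneg (mul_nonneg hC0 ht) hm0, mul_nonneg hC0 ht]
    have hqsum : Summable q := by
      apply Summable.of_norm_bounded ((hM.mul_left C).mul_right (‖w - z‖ / ρ))
      intro n
      have := hqb n
      simpa [mul_assoc] using this
    -- (w - z) * G = ∑' q
    have hGq : (w - z) * G = ∑' n, q n := by
      rw [hGdef, ← tsum_mul_left]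
      rw [Summable.tsum_eq_zero_add hqsum]
      have : q 0 = 0 := by simp [hqdef]
      rw [this, zero_add]
      apply tsum_congr
      intro n
      simp only [hqdef]
      push_cast
      ring
    -- combine
    have hsub : F w - F z - (w - z) * G = ∑' n, (c n * w ^ n - c n * z ^ n - q n) := by
      rw [hGq, hFdef]
      rw [← Summable.tsum_sub hsw hsz, ← Summable.tsum_sub (hsw.sub hsz) hqsum]
    rw [hsub]
    have hterm : ∀ n : ℕ, ‖c n * w ^ n - c n * z ^ n - q n‖
        ≤ (C * ((n:ℝ)+1) ^ 2 * ρ ^ n) * (‖w - z‖ ^ 2 / ρ ^ 2) := by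
      intro n
      have e : c n * w ^ n - c n * z ^ n - q n
          = c n * (w ^ n - z ^ n - (n:ℂ) * z ^ (n - 1) * (w - z)) := by
        simp only [hqdef]; ring
      rw [e, norm_mul]
      calc ‖c n‖ * ‖w ^ n - z ^ n - (n:ℂ) * z ^ (n-1) * (w - z)‖
          ≤ C * (((n:ℝ)+1) ^ 2 * ρ ^ n / ρ ^ 2 * ‖w - z‖ ^ 2) := by
            apply mul_le_mul (hC n) (pow2 w z hρ0 hw hzρ' n) (norm_nonneg _) hC0
        _ = (C * ((n:ℝ)+1) ^ 2 * ρ ^ n) * (‖w - z‖ ^ 2 / ρ ^ 2) := by ring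
    have hbs : Summable (fun n : ℕ => (C * ((n:ℝ)+1) ^ 2 * ρ ^ n) * (‖w - z‖ ^ 2 / ρ ^ 2)) := by
      have := (hM.mul_left C).mul_right (‖w - z‖ ^ 2 / ρ ^ 2)
      apply this.congr
      intro n; ring
    calc ‖∑' n, (c n * w ^ n - c n * z ^ n - q n)‖
        ≤ ∑' n, ‖c n * w ^ n - c n * z ^ n - q n‖ := by
          apply norm_tsum_le_tsum_norm
          apply Summable.of_nonneg_of_le (fun n => norm_nonneg _) hterm hbs
      _ ≤ ∑' n : ℕ, (C * ((n:ℝ)+1) ^ 2 * ρ ^ n) * (‖w - z‖ ^ 2 / ρ ^ 2) := by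
          apply Summable.tsum_le_tsum hterm
            (Summable.of_nonneg_of_le (fun n => norm_nonneg _) hterm hbs) hbs
      _ = C * M * (‖w - z‖ ^ 2 / ρ ^ 2) := by
          rw [show (fun n : ℕ => (C * ((n:ℝ)+1) ^ 2 * ρ ^ n) * (‖w - z‖ ^ 2 / ρ ^ 2))
              = fun n : ℕ => (‖w - z‖ ^ 2 / ρ ^ 2) * (C * (((n:ℝ)+1) ^ 2 * ρ ^ n)) from
              funext fun n => by ring]
          rw [tsum_mul_left, tsum_mul_left, ← hMdef]
          ring
  -- conclude via little-o
  rw [hasDerivAt_iff_isLittleO]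
  have hBig : (fun w => F w - F z - (w - z) * G) =O[𝓝 z] (fun w => ‖w - z‖ ^ 2) := by
    rw [isBigO_iff]
    refine ⟨C * M / ρ ^ 2, ?_⟩
    have hmem : Metric.ball (0:ℂ) ρ ∈ 𝓝 z := by
      apply Metric.isOpen_ball.mem_nhds
      simpa [Metric.mem_ball, dist_eq_norm] using hzρ
    filter_upwards [hmem] with w hw
    rw [Metric.mem_ball, dist_eq_norm, sub_zero] at hw
    have := key w hw.le
    rw [Real.norm_eq_abs, _root_.abs_of_nonneg (by positivity : (0:ℝ) ≤ ‖w - z‖ ^ 2)]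
    calc ‖F w - F z - (w - z) * G‖ ≤ C * M * (‖w - z‖ ^ 2 / ρ ^ 2) := this
      _ = C * M / ρ ^ 2 * ‖w - z‖ ^ 2 := by ring
  have hSmall : (fun w : ℂ => ‖w - z‖ ^ 2) =o[𝓝 z] (fun w => w - z) := by
    rw [isLittleO_iff]
    intro ε hε
    filter_upwards [Metric.ball_mem_nhds z hε] with w hw
    rw [Metric.mem_ball, dist_eq_norm] at hw
    rw [Real.norm_eq_abs, _root_.abs_of_nonneg (by positivity : (0:ℝ) ≤ ‖w - z‖ ^ 2)]
    calc ‖w - z‖ ^ 2 = ‖w - z‖ * ‖w - z‖ := sq ‖w - z‖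
      _ ≤ ε * ‖w - z‖ := by
          apply mul_le_mul_of_nonneg_right hw.le (norm_nonneg _)
  have := hBig.trans_isLittleO hSmall
  apply this.congr_left
  intro w
  rw [smul_eq_mul]

-- basic summability transfers
lemma norm_shift2 (hes : Summable fun n : ℕ => ((n:ℝ)+2) * ‖e (n+2)‖) :
    Summable fun n : ℕ => ‖e (n+2)‖ := by
  apply Summable.of_nonneg_of_le (fun n => norm_nonneg _) _ hes
  intro n
  nlinarith [norm_nonneg (e (n+2)), (Nat.cast_nonneg n : (0:ℝ) ≤ n)]

lemma norm_all (h0 : Summable fun n : ℕ => ‖e (n+2)‖) :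
    Summable fun n : ℕ => ‖e n‖ := (summable_nat_add_iff 2).mp h0

lemma sum_deriv_series (hes : Summable fun n : ℕ => ((n:ℝ)+2) * ‖e (n+2)‖) {z : ℂ}
    (hz : ‖z‖ ≤ 1) : Summable fun n : ℕ => ((n:ℂ)+1) * e (n+1) * z ^ n := by
  have h1 : Summable (fun n : ℕ => ((n:ℝ)+1) * ‖e (n+1)‖) := by
    apply (summable_nat_add_iff 1).mp
    apply hes.congr
    intro n; push_cast; ring
  apply Summable.of_norm_bounded h1
  intro n
  rw [norm_mul, norm_mul, norm_pow]
  have h2 : ‖((n:ℂ)+1)‖ = (n:ℝ)+1 := by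
    rw [show ((n:ℂ)+1) = ((n+1 : ℕ) : ℂ) by push_cast; ring, Complex.norm_natCast]
    push_cast; ring
  rw [h2]
  calc ((n:ℝ)+1) * ‖e (n+1)‖ * ‖z‖ ^ n ≤ ((n:ℝ)+1) * ‖e (n+1)‖ * 1 ^ n := by
        gcongr
    _ = ((n:ℝ)+1) * ‖e (n+1)‖ := by ring

lemma tail_term_bound {z ζ s : ℂ} {r : ℝ} (hz : ‖z‖ ≤ r) (hζ : ‖ζ‖ ≤ r) (hr1 : r ≤ 1)
    (hsu : ‖s‖ ≤ ‖z - ζ‖) (n : ℕ) :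
    ‖z ^ (n+2) - ζ ^ (n+2) + s * (((n:ℂ)+2) * z ^ (n+1))‖ ≤ ((n:ℝ)+2) * (2 * r * ‖z - ζ‖) := by
  have hr0 : (0:ℝ) ≤ r := le_trans (norm_nonneg z) hz
  have h1 : ‖z ^ (n+2) - ζ ^ (n+2)‖ ≤ ((n:ℝ)+2) * r ^ (n+1) * ‖z - ζ‖ := by
    have h := pow1 z ζ hz hζ (n+2)
    have e0 : n + 2 - 1 = n + 1 := rfl
    rw [e0] at h
    convert h using 2
    push_cast; ring
  have h2 : ‖s * (((n:ℂ)+2) * z ^ (n+1))‖ ≤ ((n:ℝ)+2) * r ^ (n+1) * ‖z - ζ‖ := by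
    rw [norm_mul, norm_mul, norm_pow]
    have hn : ‖((n:ℂ)+2)‖ = (n:ℝ)+2 := by
      rw [show ((n:ℂ)+2) = ((n+2 : ℕ) : ℂ) by push_cast; ring, Complex.norm_natCast]
      push_cast; ring
    rw [hn]
    calc ‖s‖ * (((n:ℝ)+2) * ‖z‖ ^ (n+1)) ≤ ‖z - ζ‖ * (((n:ℝ)+2) * r ^ (n+1)) := by gcongr
      _ = ((n:ℝ)+2) * r ^ (n+1) * ‖z - ζ‖ := by ring
  have h3 : r ^ (n+1) ≤ r := by
    calc r ^ (n+1) ≤ r ^ 1 := pow_le_pow_of_le_one hr0 hr1 (by omega)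
      _ = r := pow_one r
  calc ‖z ^ (n+2) - ζ ^ (n+2) + s * (((n:ℂ)+2) * z ^ (n+1))‖
      ≤ ‖z ^ (n+2) - ζ ^ (n+2)‖ + ‖s * (((n:ℂ)+2) * z ^ (n+1))‖ := norm_add_le _ _
    _ ≤ ((n:ℝ)+2) * r ^ (n+1) * ‖z - ζ‖ + ((n:ℝ)+2) * r ^ (n+1) * ‖z - ζ‖ := add_le_add h1 h2
    _ = ((n:ℝ)+2) * r ^ (n+1) * (2 * ‖z - ζ‖) := by ring
    _ ≤ ((n:ℝ)+2) * r * (2 * ‖z - ζ‖) := by gcongr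
    _ = ((n:ℝ)+2) * (2 * r * ‖z - ζ‖) := by ring

lemma tail_summable (hes : Summable fun n : ℕ => ((n:ℝ)+2) * ‖e (n+2)‖)
    {z ζ s : ℂ} {r : ℝ} (hz : ‖z‖ ≤ r) (hζ : ‖ζ‖ ≤ r) (hr1 : r ≤ 1)
    (hsu : ‖s‖ ≤ ‖z - ζ‖) :
    Summable fun n : ℕ => e (n+2) * (z ^ (n+2) - ζ ^ (n+2) + s * (((n:ℂ)+2) * z ^ (n+1))) := by
  apply Summable.of_norm_bounded (hes.mul_right (2 * r * ‖z - ζ‖))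
  intro n
  rw [norm_mul]
  calc ‖e (n+2)‖ * ‖z ^ (n+2) - ζ ^ (n+2) + s * (((n:ℂ)+2) * z ^ (n+1))‖
      ≤ ‖e (n+2)‖ * (((n:ℝ)+2) * (2 * r * ‖z - ζ‖)) := by
        gcongr
        exact tail_term_bound hz hζ hr1 hsu n
    _ = ((n:ℝ)+2) * ‖e (n+2)‖ * (2 * r * ‖z - ζ‖) := by ring

lemma tail_est (hes : Summable fun n : ℕ => ((n:ℝ)+2) * ‖e (n+2)‖)
    {z ζ s : ℂ} {r : ℝ} (hz : ‖z‖ ≤ r) (hζ : ‖ζ‖ ≤ r) (hr1 : r ≤ 1)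
    (hsu : ‖s‖ ≤ ‖z - ζ‖) :
    ‖∑' n : ℕ, e (n+2) * (z ^ (n+2) - ζ ^ (n+2) + s * (((n:ℂ)+2) * z ^ (n+1)))‖
      ≤ (∑' n : ℕ, ((n:ℝ)+2) * ‖e (n+2)‖) * (2 * r * ‖z - ζ‖) := by
  have hb : ∀ n : ℕ, ‖e (n+2) * (z ^ (n+2) - ζ ^ (n+2) + s * (((n:ℂ)+2) * z ^ (n+1)))‖
      ≤ ((n:ℝ)+2) * ‖e (n+2)‖ * (2 * r * ‖z - ζ‖) := by
    intro n
    rw [norm_mul]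
    calc ‖e (n+2)‖ * ‖z ^ (n+2) - ζ ^ (n+2) + s * (((n:ℂ)+2) * z ^ (n+1))‖
        ≤ ‖e (n+2)‖ * (((n:ℝ)+2) * (2 * r * ‖z - ζ‖)) := by
          gcongr
          exact tail_term_bound hz hζ hr1 hsu n
      _ = ((n:ℝ)+2) * ‖e (n+2)‖ * (2 * r * ‖z - ζ‖) := by ring
  have hns : Summable fun n : ℕ =>
      ‖e (n+2) * (z ^ (n+2) - ζ ^ (n+2) + s * (((n:ℂ)+2) * z ^ (n+1)))‖ :=
    Summable.of_nonneg_of_le (fun n => norm_nonneg _) hb (hes.mul_right _)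
  calc ‖∑' n : ℕ, e (n+2) * (z ^ (n+2) - ζ ^ (n+2) + s * (((n:ℂ)+2) * z ^ (n+1)))‖
      ≤ ∑' n : ℕ, ‖e (n+2) * (z ^ (n+2) - ζ ^ (n+2) + s * (((n:ℂ)+2) * z ^ (n+1)))‖ :=
        norm_tsum_le_tsum_norm hns
    _ ≤ ∑' n : ℕ, ((n:ℝ)+2) * ‖e (n+2)‖ * (2 * r * ‖z - ζ‖) :=
        Summable.tsum_le_tsum hb hns (hes.mul_right _)
    _ = (∑' n : ℕ, ((n:ℝ)+2) * ‖e (n+2)‖) * (2 * r * ‖z - ζ‖) := tsum_mul_right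

lemma tail_comb (hes : Summable fun n : ℕ => ((n:ℝ)+2) * ‖e (n+2)‖)
    {z ζ : ℂ} (hz : ‖z‖ ≤ 1) (hζ : ‖ζ‖ ≤ 1) (s : ℂ) (hsu : ‖s‖ ≤ ‖z - ζ‖) :
    (∑' n : ℕ, e (n+2) * (z ^ (n+2) - ζ ^ (n+2)))
      + s * (∑' n : ℕ, ((n:ℂ)+2) * e (n+2) * z ^ (n+1))
    = ∑' n : ℕ, e (n+2) * (z ^ (n+2) - ζ ^ (n+2) + s * (((n:ℂ)+2) * z ^ (n+1))) := by
  have h1 : Summable fun n : ℕ => e (n+2) * (z ^ (n+2) - ζ ^ (n+2)) := by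
    apply Summable.of_norm_bounded (hes.mul_right 2)
    intro n
    rw [norm_mul]
    have hd : ‖z ^ (n+2) - ζ ^ (n+2)‖ ≤ 2 := by
      calc ‖z ^ (n+2) - ζ ^ (n+2)‖ ≤ ‖z ^ (n+2)‖ + ‖ζ ^ (n+2)‖ := norm_sub_le _ _
        _ ≤ 1 + 1 := by
            rw [norm_pow, norm_pow]
            exact add_le_add (pow_le_one₀ (norm_nonneg z) hz) (pow_le_one₀ (norm_nonneg ζ) hζ)
        _ = 2 := by norm_num
    nlinarith [norm_nonneg (e (n+2)), (Nat.cast_nonneg n : (0:ℝ) ≤ n),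
      norm_nonneg (z ^ (n+2) - ζ ^ (n+2))]
  have h2 : Summable fun n : ℕ => s * (((n:ℂ)+2) * e (n+2) * z ^ (n+1)) := by
    apply Summable.of_norm_bounded (hes.mul_right (‖s‖))
    intro n
    rw [norm_mul, norm_mul, norm_mul, norm_pow]
    have hn : ‖((n:ℂ)+2)‖ = (n:ℝ)+2 := by
      rw [show ((n:ℂ)+2) = ((n+2 : ℕ) : ℂ) by push_cast; ring, Complex.norm_natCast]
      push_cast; ring
    rw [hn]
    have hz1 : ‖z‖ ^ (n+1) ≤ 1 := pow_le_one₀ (norm_nonneg z) hz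
    nlinarith [mul_nonneg (mul_nonneg (norm_nonneg s)
      (mul_nonneg (by positivity : (0:ℝ) ≤ (n:ℝ)+2) (norm_nonneg (e (n+2)))))
      (sub_nonneg.mpr hz1)]
  rw [show s * (∑' n : ℕ, ((n:ℂ)+2) * e (n+2) * z ^ (n+1))
      = ∑' n : ℕ, s * (((n:ℂ)+2) * e (n+2) * z ^ (n+1)) from (tsum_mul_left).symm]
  rw [← Summable.tsum_add h1 h2]
  apply tsum_congr
  intro n
  ring

lemma sum_split (hs : Summable fun n : ℕ => ‖e n‖) {z : ℂ} (hz : ‖z‖ ≤ 1) :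
    ∑' n : ℕ, e n * z ^ n = e 0 + e 1 * z + ∑' n : ℕ, e (n+2) * z ^ (n+2) := by
  have h := summable_aux hs hz
  rw [Summable.tsum_eq_zero_add h]
  have h1 : Summable fun n : ℕ => e (n+1) * z ^ (n+1) :=
    (summable_nat_add_iff (f := fun n : ℕ => e n * z ^ n) 1).mpr h
  rw [Summable.tsum_eq_zero_add h1]
  simp only [pow_zero, mul_one, zero_add, pow_one]
  rw [← add_assoc]

lemma deriv_split (hes : Summable fun n : ℕ => ((n:ℝ)+2) * ‖e (n+2)‖) {z : ℂ} (hz : ‖z‖ ≤ 1) :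
    ∑' n : ℕ, ((n:ℂ)+1) * e (n+1) * z ^ n
      = e 1 + ∑' n : ℕ, ((n:ℂ)+2) * e (n+2) * z ^ (n+1) := by
  have h := sum_deriv_series hes hz
  rw [Summable.tsum_eq_zero_add h]
  simp only [Nat.cast_zero, zero_add, pow_zero, one_mul, mul_one]
  congr 1
  exact tsum_congr fun n => by push_cast [show n+1+1 = n+2 from rfl]; ring

lemma sum_at_zero (e : ℕ → ℂ) : ∑' n : ℕ, e n * (0:ℂ) ^ n = e 0 := by
  rw [tsum_eq_single 0]
  · simp
  · intro n hn
    simp [zero_pow hn]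
-- bound on the derivative tail
lemma Tbound (hes : Summable fun n : ℕ => ((n:ℝ)+2) * ‖e (n+2)‖) {z : ℂ} (hz : ‖z‖ ≤ 1) :
    ‖∑' n : ℕ, ((n:ℂ)+2) * e (n+2) * z ^ (n+1)‖ ≤ ∑' n : ℕ, ((n:ℝ)+2) * ‖e (n+2)‖ := by
  have hb : ∀ n : ℕ, ‖((n:ℂ)+2) * e (n+2) * z ^ (n+1)‖ ≤ ((n:ℝ)+2) * ‖e (n+2)‖ := by
    intro n
    rw [norm_mul, norm_mul, norm_pow]
    have hn : ‖((n:ℂ)+2)‖ = (n:ℝ)+2 := by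
      rw [show ((n:ℂ)+2) = ((n+2 : ℕ) : ℂ) by push_cast; ring, Complex.norm_natCast]
      push_cast; ring
    rw [hn]
    have hz1 : ‖z‖ ^ (n+1) ≤ 1 := pow_le_one₀ (norm_nonneg z) hz
    nlinarith [mul_nonneg (by positivity : (0:ℝ) ≤ (n:ℝ)+2) (norm_nonneg (e (n+2))),
      mul_nonneg (mul_nonneg (by positivity : (0:ℝ) ≤ (n:ℝ)+2) (norm_nonneg (e (n+2))))
        (sub_nonneg.mpr hz1)]
  have hns : Summable fun n : ℕ => ‖((n:ℂ)+2) * e (n+2) * z ^ (n+1)‖ :=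
    Summable.of_nonneg_of_le (fun n => norm_nonneg _) hb hes
  exact (norm_tsum_le_tsum_norm hns).trans (Summable.tsum_le_tsum hb hns hes)

lemma summable_Tc (hes : Summable fun n : ℕ => ((n:ℝ)+2) * ‖e (n+2)‖) {z : ℂ} (hz : ‖z‖ ≤ 1) :
    Summable fun n : ℕ => ((n:ℂ)+2) * e (n+2) * z ^ (n+1) := by
  apply Summable.of_norm_bounded hes
  intro n
  rw [norm_mul, norm_mul, norm_pow]
  have hn : ‖((n:ℂ)+2)‖ = (n:ℝ)+2 := by
    rw [show ((n:ℂ)+2) = ((n+2 : ℕ) : ℂ) by push_cast; ring, Complex.norm_natCast]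
    push_cast; ring
  rw [hn]
  have hz1 : ‖z‖ ^ (n+1) ≤ 1 := pow_le_one₀ (norm_nonneg z) hz
  nlinarith [mul_nonneg (by positivity : (0:ℝ) ≤ (n:ℝ)+2) (norm_nonneg (e (n+2))),
    mul_nonneg (mul_nonneg (by positivity : (0:ℝ) ≤ (n:ℝ)+2) (norm_nonneg (e (n+2))))
      (sub_nonneg.mpr hz1)]

lemma master (c d : ℕ → ℂ) (hc0 : c 0 = 0) (hc1 : c 1 = 1) (hd0 : d 0 = 0) (hd1 : d 1 = 0)
    (hcs : Summable fun n : ℕ => ((n:ℝ)+2) * ‖c (n+2)‖)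
    (hds : Summable fun n : ℕ => ((n:ℝ)+2) * ‖d (n+2)‖)
    (hhalf : (∑' n : ℕ, ((n:ℝ)+2) * ‖c (n+2)‖) + (∑' n : ℕ, ((n:ℝ)+2) * ‖d (n+2)‖) ≤ 1/2) :
    UniformlyStarlikeOnDisk (fun z => ∑' n : ℕ, c n * z ^ n)
      (fun z => ∑' n : ℕ, d n * z ^ n) := by
  have hSc0 : 0 ≤ ∑' n : ℕ, ((n:ℝ)+2) * ‖c (n+2)‖ := tsum_nonneg (fun n => by positivity)
  have hSd0 : 0 ≤ ∑' n : ℕ, ((n:ℝ)+2) * ‖d (n+2)‖ := tsum_nonneg (fun n => by positivity)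
  have hcn : Summable fun n : ℕ => ‖c n‖ := norm_all (norm_shift2 hcs)
  have hdn : Summable fun n : ℕ => ‖d n‖ := norm_all (norm_shift2 hds)
  set h : ℂ → ℂ := fun z => ∑' n : ℕ, c n * z ^ n with hhdef
  set g : ℂ → ℂ := fun z => ∑' n : ℕ, d n * z ^ n with hgdef
  have hDh : ∀ z : ℂ, ‖z‖ < 1 → deriv h z = ∑' n : ℕ, ((n:ℂ)+1) * c (n+1) * z ^ n :=
    fun z hz => (hasDerivAt_tsum_pow c hcn hz).deriv
  have hDg : ∀ z : ℂ, ‖z‖ < 1 → deriv g z = ∑' n : ℕ, ((n:ℂ)+1) * d (n+1) * z ^ n :=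
    fun z hz => (hasDerivAt_tsum_pow d hdn hz).deriv
  have hz0 : h 0 = 0 := by rw [hhdef]; simp only []; rw [sum_at_zero c, hc0]
  have gz0 : g 0 = 0 := by rw [hgdef]; simp only []; rw [sum_at_zero d, hd0]
  -- the central claim
  have claim : ∀ z ζ : ℂ, ‖z‖ < 1 → ‖ζ‖ < 1 → z ≠ ζ →
      0 < (((h z + conj (g z)) - (h ζ + conj (g ζ))) /
        ((z - ζ) * deriv h z - conj (z - ζ) * conj (deriv g z))).re := by
    intro z ζ hz hζ hne
    have hun : 0 < ‖z - ζ‖ := by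
      rw [norm_pos_iff]
      exact sub_ne_zero.mpr hne
    set r : ℝ := max ‖z‖ ‖ζ‖ with hrdef
    have hzr : ‖z‖ ≤ r := le_max_left _ _
    have hζr : ‖ζ‖ ≤ r := le_max_right _ _
    have hr1 : r < 1 := max_lt hz hζ
    have hr0 : 0 ≤ r := le_trans (norm_nonneg z) hzr
    -- summability of the basic pieces
    have hsz2 : Summable fun n : ℕ => c (n+2) * z ^ (n+2) :=
      (summable_nat_add_iff (f := fun n : ℕ => c n * z ^ n) 2).mpr (summable_aux hcn hz.le)
    have hsζ2 : Summable fun n : ℕ => c (n+2) * ζ ^ (n+2) :=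
      (summable_nat_add_iff (f := fun n : ℕ => c n * ζ ^ n) 2).mpr (summable_aux hcn hζ.le)
    have hsz2d : Summable fun n : ℕ => d (n+2) * z ^ (n+2) :=
      (summable_nat_add_iff (f := fun n : ℕ => d n * z ^ n) 2).mpr (summable_aux hdn hz.le)
    have hsζ2d : Summable fun n : ℕ => d (n+2) * ζ ^ (n+2) :=
      (summable_nat_add_iff (f := fun n : ℕ => d n * ζ ^ n) 2).mpr (summable_aux hdn hζ.le)
    -- the first order pieces
    have eS1c : (∑' n : ℕ, c (n+2) * (z ^ (n+2) - ζ ^ (n+2)))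
        = (∑' n : ℕ, c (n+2) * z ^ (n+2)) - (∑' n : ℕ, c (n+2) * ζ ^ (n+2)) := by
      rw [← Summable.tsum_sub hsz2 hsζ2]
      exact tsum_congr fun n => by ring
    have eS1d : (∑' n : ℕ, d (n+2) * (z ^ (n+2) - ζ ^ (n+2)))
        = (∑' n : ℕ, d (n+2) * z ^ (n+2)) - (∑' n : ℕ, d (n+2) * ζ ^ (n+2)) := by
      rw [← Summable.tsum_sub hsz2d hsζ2d]
      exact tsum_congr fun n => by ring
    have hhz : h z - h ζ = (z - ζ) + ∑' n : ℕ, c (n+2) * (z ^ (n+2) - ζ ^ (n+2)) := by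
      rw [hhdef]
      simp only []
      rw [sum_split hcn hz.le, sum_split hcn hζ.le, hc0, hc1, eS1c]
      ring
    have hgz : g z - g ζ = ∑' n : ℕ, d (n+2) * (z ^ (n+2) - ζ ^ (n+2)) := by
      rw [hgdef]
      simp only []
      rw [sum_split hdn hz.le, sum_split hdn hζ.le, hd0, hd1, eS1d]
      ring
    have hDhz : deriv h z = 1 + ∑' n : ℕ, ((n:ℂ)+2) * c (n+2) * z ^ (n+1) := by
      rw [hDh z hz, deriv_split hcs hz.le, hc1]
    have hDgz : deriv g z = ∑' n : ℕ, ((n:ℂ)+2) * d (n+2) * z ^ (n+1) := by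
      rw [hDg z hz, deriv_split hds hz.le, hd1, zero_add]
    -- combined tails
    have ePcM := tail_comb hcs hz.le hζ.le (-(z - ζ)) (by rw [norm_neg])
    have ePcP := tail_comb hcs hz.le hζ.le (z - ζ) (le_refl _)
    have ePdM := tail_comb hds hz.le hζ.le (-(z - ζ)) (by rw [norm_neg])
    have ePdP := tail_comb hds hz.le hζ.le (z - ζ) (le_refl _)
    set Ac : ℂ := ∑' n : ℕ, c (n+2) * (z ^ (n+2) - ζ ^ (n+2) + (-(z - ζ)) * (((n:ℂ)+2) * z ^ (n+1))) with hAcdef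
    set Bc : ℂ := ∑' n : ℕ, c (n+2) * (z ^ (n+2) - ζ ^ (n+2) + (z - ζ) * (((n:ℂ)+2) * z ^ (n+1))) with hBcdef
    set Ad : ℂ := ∑' n : ℕ, d (n+2) * (z ^ (n+2) - ζ ^ (n+2) + (-(z - ζ)) * (((n:ℂ)+2) * z ^ (n+1))) with hAddef
    set Bd : ℂ := ∑' n : ℕ, d (n+2) * (z ^ (n+2) - ζ ^ (n+2) + (z - ζ) * (((n:ℂ)+2) * z ^ (n+1))) with hBddef
    set P : ℂ := Ac + conj Bd with hPdef
    set Q : ℂ := 2 * (z - ζ) + (Bc + conj Ad) with hQdef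
    set N : ℂ := (h z + conj (g z)) - (h ζ + conj (g ζ)) with hNdef
    set D : ℂ := (z - ζ) * deriv h z - conj (z - ζ) * conj (deriv g z) with hDdef
    have eN : N = ((z - ζ) + ∑' n : ℕ, c (n+2) * (z ^ (n+2) - ζ ^ (n+2)))
        + conj (∑' n : ℕ, d (n+2) * (z ^ (n+2) - ζ ^ (n+2))) := by
      rw [hNdef, ← hgz, ← hhz, map_sub]
      ring
    have eqP : N - D = P := by
      rw [eN, hDdef, hDhz, hDgz, hPdef, ← ePcM, ← ePdP,
        map_add (starRingEnd ℂ), map_mul (starRingEnd ℂ)]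
      ring
    have eqQ : N + D = Q := by
      rw [eN, hDdef, hDhz, hDgz, hQdef, ← ePcP, ← ePdM,
        map_add (starRingEnd ℂ), map_mul (starRingEnd ℂ), map_neg (starRingEnd ℂ)]
      ring
    -- norm estimates
    have hcb : ‖Ac‖ ≤ (∑' n : ℕ, ((n:ℝ)+2) * ‖c (n+2)‖) * (2 * r * ‖z - ζ‖) :=
      tail_est (s := -(z - ζ)) hcs hzr hζr hr1.le (by rw [norm_neg])
    have hcb' : ‖Bc‖ ≤ (∑' n : ℕ, ((n:ℝ)+2) * ‖c (n+2)‖) * (2 * r * ‖z - ζ‖) :=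
      tail_est (s := z - ζ) hcs hzr hζr hr1.le (le_refl _)
    have hdb : ‖Ad‖ ≤ (∑' n : ℕ, ((n:ℝ)+2) * ‖d (n+2)‖) * (2 * r * ‖z - ζ‖) :=
      tail_est (s := -(z - ζ)) hds hzr hζr hr1.le (by rw [norm_neg])
    have hdb' : ‖Bd‖ ≤ (∑' n : ℕ, ((n:ℝ)+2) * ‖d (n+2)‖) * (2 * r * ‖z - ζ‖) :=
      tail_est (s := z - ζ) hds hzr hζr hr1.le (le_refl _)
    have hSsum : (∑' n : ℕ, ((n:ℝ)+2) * ‖c (n+2)‖) * (2 * r * ‖z - ζ‖)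
        + (∑' n : ℕ, ((n:ℝ)+2) * ‖d (n+2)‖) * (2 * r * ‖z - ζ‖) ≤ r * ‖z - ζ‖ := by
      nlinarith [mul_nonneg hr0 hun.le]
    have hPb : ‖P‖ ≤ r * ‖z - ζ‖ := by
      rw [hPdef]
      calc ‖Ac + conj Bd‖ ≤ ‖Ac‖ + ‖conj Bd‖ := norm_add_le _ _
        _ = ‖Ac‖ + ‖Bd‖ := by rw [RCLike.norm_conj]
        _ ≤ r * ‖z - ζ‖ := le_trans (add_le_add hcb hdb') hSsum
    have hXb : ‖Bc + conj Ad‖ ≤ r * ‖z - ζ‖ := by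
      calc ‖Bc + conj Ad‖ ≤ ‖Bc‖ + ‖conj Ad‖ := norm_add_le _ _
        _ = ‖Bc‖ + ‖Ad‖ := by rw [RCLike.norm_conj]
        _ ≤ r * ‖z - ζ‖ := le_trans (add_le_add hcb' hdb) hSsum
    have hQb : (2 - r) * ‖z - ζ‖ ≤ ‖Q‖ := by
      have h2u : ‖(2:ℂ) * (z - ζ)‖ = 2 * ‖z - ζ‖ := by
        rw [norm_mul]
        norm_num
      have htri : ‖(2:ℂ) * (z - ζ)‖ ≤ ‖Q‖ + ‖Bc + conj Ad‖ := by
        have e : (2:ℂ) * (z - ζ) = Q - (Bc + conj Ad) := by rw [hQdef]; ring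
        rw [e]
        exact norm_sub_le _ _
      rw [h2u] at htri
      linarith
    have hPQ : ‖P‖ < ‖Q‖ := by
      have h1 : r * ‖z - ζ‖ < (2 - r) * ‖z - ζ‖ := by nlinarith
      linarith
    have hD0 : D ≠ 0 := by
      intro h0
      have : P = Q := by rw [← eqP, ← eqQ, h0, sub_zero, add_zero]
      rw [this] at hPQ
      exact lt_irrefl _ hPQ
    -- conclude
    have e1 : (N / D).re = (N.re * D.re + N.im * D.im) / Complex.normSq D := by
      rw [Complex.div_re]
      ring
    have e2 : Complex.normSq Q - Complex.normSq P = 4 * (N.re * D.re + N.im * D.im) := by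
      rw [← eqP, ← eqQ]
      simp only [Complex.normSq_apply, Complex.add_re, Complex.add_im, Complex.sub_re,
        Complex.sub_im]
      ring
    have e3 : Complex.normSq P < Complex.normSq Q := by
      rw [Complex.normSq_eq_norm_sq, Complex.normSq_eq_norm_sq]
      exact pow_lt_pow_left₀ hPQ (norm_nonneg _) (by norm_num)
    rw [show (((h z + conj (g z)) - (h ζ + conj (g ζ))) /
        ((z - ζ) * deriv h z - conj (z - ζ) * conj (deriv g z))) = N / D from rfl]
    rw [e1]
    apply div_pos (by linarith) (Complex.normSq_pos.mpr hD0)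
  -- now the four conditions
  refine ⟨?_, ?_, ?_, ?_⟩
  · rw [hz0, gz0]
    simp
  · intro z hzb
    rw [mem_ball_zero_iff] at hzb
    rw [hDh z hzb, hDg z hzb, deriv_split hcs hzb.le, deriv_split hds hzb.le, hc1, hd1, zero_add]
    have hTc := Tbound hcs hzb.le
    have hTd := Tbound hds hzb.le
    have h1 : (1:ℝ) ≤ ‖(1:ℂ) + ∑' n : ℕ, ((n:ℂ)+2) * c (n+2) * z ^ (n+1)‖
        + ‖∑' n : ℕ, ((n:ℂ)+2) * c (n+2) * z ^ (n+1)‖ := by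
      have e : (1:ℂ) = (1 + ∑' n : ℕ, ((n:ℂ)+2) * c (n+2) * z ^ (n+1))
          - ∑' n : ℕ, ((n:ℂ)+2) * c (n+2) * z ^ (n+1) := by ring
      calc (1:ℝ) = ‖(1:ℂ)‖ := by norm_num
        _ ≤ ‖(1:ℂ) + ∑' n : ℕ, ((n:ℂ)+2) * c (n+2) * z ^ (n+1)‖
            + ‖∑' n : ℕ, ((n:ℂ)+2) * c (n+2) * z ^ (n+1)‖ := by
          conv_lhs => rw [e]
          exact norm_sub_le _ _
    linarith
  · intro z hzb ζ hζb hne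
    rw [mem_ball_zero_iff] at hzb hζb
    exact (claim z ζ hzb hζb hne).le
  · intro z hzb hz00
    rw [mem_ball_zero_iff] at hzb
    have := claim z 0 hzb (by norm_num) hz00
    rw [hz0, gz0] at this
    simpa using this

lemma transfer {h g h' g' : ℂ → ℂ} (hh : ∀ z ∈ ball (0:ℂ) 1, h z = h' z)
    (hg : ∀ z ∈ ball (0:ℂ) 1, g z = g' z) (H : UniformlyStarlikeOnDisk h' g') :
    UniformlyStarlikeOnDisk h g := by
  obtain ⟨H1, H2, H3, H4⟩ := H
  have h0m : (0:ℂ) ∈ ball (0:ℂ) 1 := mem_ball_self one_pos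
  have dh : ∀ z ∈ ball (0:ℂ) 1, deriv h z = deriv h' z := by
    intro z hz
    exact Filter.EventuallyEq.deriv_eq
      (Filter.eventuallyEq_of_mem (isOpen_ball.mem_nhds hz) hh)
  have dg : ∀ z ∈ ball (0:ℂ) 1, deriv g z = deriv g' z := by
    intro z hz
    exact Filter.EventuallyEq.deriv_eq
      (Filter.eventuallyEq_of_mem (isOpen_ball.mem_nhds hz) hg)
  refine ⟨by rw [hh 0 h0m, hg 0 h0m]; exact H1, ?_, ?_, ?_⟩
  · intro z hz
    rw [dh z hz, dg z hz]
    exact H2 z hz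
  · intro z hz ζ hζ hne
    rw [hh z hz, hh ζ hζ, hg z hz, hg ζ hζ, dh z hz, dg z hz]
    exact H3 z hz ζ hζ hne
  · intro z hz hne
    rw [hh z hz, hg z hz, dh z hz, dg z hz]
    exact H4 z hz hne

end BIUS2

open BIUS2

/-- If `H(z) = z + ∑_{n≥2} Aₙ zⁿ`, `G(z) = ∑_{n≥2} Bₙ zⁿ` satisfy
`∑_{n≥2} n(2n-1)(|Aₙ|+|Bₙ|) ≤ 1` and `a ≥ 1`, then the coefficients
`a'ₙ = ((a+n)/(a+1)) Aₙ`, `b'ₙ = ((a+n)/(a+1)) Bₙ` of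
`h_a = (aH + zH')/(a+1)`, `g_a = (aG + zG')/(a+1)` satisfy
`∑_{n≥2} n|a'ₙ| + ∑_{n≥1} n|b'ₙ| ≤ 1/2`; consequently `f_a = h_a + conj g_a` is
uniformly starlike in `𝔻`. -/
theorem bernardi_inverse_uniformly_starlike (a : ℝ) (ha : 1 ≤ a)
    (A B : ℕ → ℂ) (hA0 : A 0 = 0) (hA1 : A 1 = 1) (hB0 : B 0 = 0) (hB1 : B 1 = 0)
    (hsum : Summable (fun n : ℕ => (((n + 2) * (2 * (n + 2) - 1) : ℝ))
        * (‖A (n + 2)‖ + ‖B (n + 2)‖)))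
    (hcoef : (∑' n : ℕ, (((n + 2) * (2 * (n + 2) - 1) : ℝ))
        * (‖A (n + 2)‖ + ‖B (n + 2)‖)) ≤ 1) :
    (Summable fun n : ℕ =>
      ((n + 2 : ℝ)) * ‖(((a + (n + 2)) / (a + 1) : ℝ) : ℂ) * A (n + 2)‖) ∧
    (Summable fun n : ℕ =>
      ((n + 1 : ℝ)) * ‖(((a + (n + 1)) / (a + 1) : ℝ) : ℂ) * B (n + 1)‖) ∧
    (∑' n : ℕ, ((n + 2 : ℝ)) * ‖(((a + (n + 2)) / (a + 1) : ℝ) : ℂ) * A (n + 2)‖)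
      + (∑' n : ℕ, ((n + 1 : ℝ)) * ‖(((a + (n + 1)) / (a + 1) : ℝ) : ℂ) * B (n + 1)‖)
      ≤ 1 / 2 ∧
    UniformlyStarlikeOnDisk
      (fun z => ((a : ℂ) * (∑' n : ℕ, A n * z ^ n)
        + z * deriv (fun w => ∑' n : ℕ, A n * w ^ n) z) / ((a : ℂ) + 1))
      (fun z => ((a : ℂ) * (∑' n : ℕ, B n * z ^ n)
        + z * deriv (fun w => ∑' n : ℕ, B n * w ^ n) z) / ((a : ℂ) + 1)) := by
  have ha1 : (0:ℝ) < a + 1 := by linarith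
  -- the dominating series, with nonneg terms
  have htn0 : ∀ n : ℕ, (0:ℝ) ≤ (((n:ℝ) + 2) * (2 * ((n:ℝ) + 2) - 1)) := by
    intro n
    nlinarith [(Nat.cast_nonneg n : (0:ℝ) ≤ n)]
  -- pointwise bound, A part
  have hptA : ∀ n : ℕ, ((n:ℝ) + 2) * ‖(((a + (n + 2)) / (a + 1) : ℝ) : ℂ) * A (n + 2)‖
      ≤ 1/2 * ((((n:ℝ) + 2) * (2 * ((n:ℝ) + 2) - 1)) * ‖A (n + 2)‖) := by
    intro n
    rw [norm_mul, Complex.norm_real, Real.norm_eq_abs,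
      _root_.abs_of_nonneg (by positivity : (0:ℝ) ≤ (a + ((n:ℝ) + 2)) / (a + 1))]
    have key : ((n:ℝ) + 2) * ((a + ((n:ℝ) + 2)) / (a + 1))
        ≤ 1/2 * (((n:ℝ) + 2) * (2 * ((n:ℝ) + 2) - 1)) := by
      rw [mul_div_assoc', div_le_iff₀ ha1]
      nlinarith [(Nat.cast_nonneg n : (0:ℝ) ≤ n), sub_nonneg.mpr ha,
        mul_nonneg (Nat.cast_nonneg n : (0:ℝ) ≤ n) (sub_nonneg.mpr ha),
        mul_nonneg (mul_nonneg (Nat.cast_nonneg n : (0:ℝ) ≤ n)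
          (Nat.cast_nonneg n : (0:ℝ) ≤ n)) (by linarith : (0:ℝ) ≤ a)]
    calc ((n:ℝ) + 2) * ((a + ((n:ℝ) + 2)) / (a + 1) * ‖A (n + 2)‖)
        = (((n:ℝ) + 2) * ((a + ((n:ℝ) + 2)) / (a + 1))) * ‖A (n + 2)‖ := by ring
      _ ≤ (1/2 * (((n:ℝ) + 2) * (2 * ((n:ℝ) + 2) - 1))) * ‖A (n + 2)‖ :=
          mul_le_mul_of_nonneg_right key (norm_nonneg _)
      _ = 1/2 * ((((n:ℝ) + 2) * (2 * ((n:ℝ) + 2) - 1)) * ‖A (n + 2)‖) := by ring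
  -- pointwise bound, B part
  have hptB : ∀ n : ℕ, ((n:ℝ) + 1) * ‖(((a + (n + 1)) / (a + 1) : ℝ) : ℂ) * B (n + 1)‖
      ≤ 1/2 * ((((n:ℝ) + 1) * (2 * ((n:ℝ) + 1) - 1)) * ‖B (n + 1)‖) := by
    intro n
    rw [norm_mul, Complex.norm_real, Real.norm_eq_abs,
      _root_.abs_of_nonneg (by positivity : (0:ℝ) ≤ (a + ((n:ℝ) + 1)) / (a + 1))]
    match n with
    | 0 => simp [hB1]
    | (m+1) =>
      push_cast
      rw [div_mul_eq_mul_div, mul_div_assoc', div_le_iff₀ ha1]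
      have hx : (0:ℝ) ≤ (m:ℝ) := Nat.cast_nonneg m
      have ht : (0:ℝ) ≤ ‖B (m+1+1)‖ := norm_nonneg _
      nlinarith [mul_nonneg ht (mul_nonneg hx (sub_nonneg.mpr ha)),
        mul_nonneg ht (mul_nonneg (mul_nonneg hx hx) (by linarith : (0:ℝ) ≤ a)),
        mul_nonneg ht (sub_nonneg.mpr ha), mul_nonneg ht hx]
  -- summable dominating series
  have hgA : Summable fun n : ℕ => (((n:ℝ) + 2) * (2 * ((n:ℝ) + 2) - 1)) * ‖A (n + 2)‖ := by
    apply Summable.of_nonneg_of_le (fun n => by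
      exact mul_nonneg (htn0 n) (norm_nonneg _)) _ hsum
    intro n
    have := htn0 n
    nlinarith [norm_nonneg (A (n+2)), norm_nonneg (B (n+2))]
  have hgB : Summable fun n : ℕ => (((n:ℝ) + 1) * (2 * ((n:ℝ) + 1) - 1)) * ‖B (n + 1)‖ := by
    apply (summable_nat_add_iff
      (f := fun n : ℕ => (((n:ℝ) + 1) * (2 * ((n:ℝ) + 1) - 1)) * ‖B (n + 1)‖) 1).mp
    apply Summable.of_nonneg_of_le _ _ hsum
    · intro n
      have : (0:ℝ) ≤ ((((n+1:ℕ):ℝ) + 1) * (2 * (((n+1:ℕ):ℝ) + 1) - 1)) := by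
        push_cast
        nlinarith [(Nat.cast_nonneg n : (0:ℝ) ≤ n)]
      exact mul_nonneg this (norm_nonneg _)
    · intro n
      push_cast
      nlinarith [norm_nonneg (A (n+2)), norm_nonneg (B (n+2)), htn0 n]
  -- first conjunct
  have sumA : Summable fun n : ℕ =>
      ((n + 2 : ℝ)) * ‖(((a + (n + 2)) / (a + 1) : ℝ) : ℂ) * A (n + 2)‖ :=
    Summable.of_nonneg_of_le (fun n => by positivity) hptA (hgA.mul_left (1/2))
  have sumB : Summable fun n : ℕ =>
      ((n + 1 : ℝ)) * ‖(((a + (n + 1)) / (a + 1) : ℝ) : ℂ) * B (n + 1)‖ :=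
    Summable.of_nonneg_of_le (fun n => by positivity) hptB (hgB.mul_left (1/2))
  have part3 : (∑' n : ℕ, ((n + 2 : ℝ)) * ‖(((a + (n + 2)) / (a + 1) : ℝ) : ℂ) * A (n + 2)‖)
      + (∑' n : ℕ, ((n + 1 : ℝ)) * ‖(((a + (n + 1)) / (a + 1) : ℝ) : ℂ) * B (n + 1)‖)
      ≤ 1 / 2 := by
    have t1 : (∑' n : ℕ, ((n + 2 : ℝ)) * ‖(((a + (n + 2)) / (a + 1) : ℝ) : ℂ) * A (n + 2)‖)
        ≤ ∑' n : ℕ, 1/2 * ((((n:ℝ) + 2) * (2 * ((n:ℝ) + 2) - 1)) * ‖A (n + 2)‖) :=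
      Summable.tsum_le_tsum hptA sumA (hgA.mul_left (1/2))
    have t2 : (∑' n : ℕ, ((n + 1 : ℝ)) * ‖(((a + (n + 1)) / (a + 1) : ℝ) : ℂ) * B (n + 1)‖)
        ≤ ∑' n : ℕ, 1/2 * ((((n:ℝ) + 1) * (2 * ((n:ℝ) + 1) - 1)) * ‖B (n + 1)‖) :=
      Summable.tsum_le_tsum hptB sumB (hgB.mul_left (1/2))
    rw [tsum_mul_left] at t1 t2
    -- shift the B series
    have hshift : (∑' n : ℕ, (((n:ℝ) + 1) * (2 * ((n:ℝ) + 1) - 1)) * ‖B (n + 1)‖)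
        = ∑' n : ℕ, (((n:ℝ) + 2) * (2 * ((n:ℝ) + 2) - 1)) * ‖B (n + 2)‖ := by
      rw [Summable.tsum_eq_zero_add hgB]
      rw [hB1]
      simp only [norm_zero, mul_zero, zero_add]
      apply tsum_congr
      intro n
      push_cast
      ring_nf
    have hcomb : (∑' n : ℕ, (((n:ℝ) + 2) * (2 * ((n:ℝ) + 2) - 1)) * ‖A (n + 2)‖)
        + (∑' n : ℕ, (((n:ℝ) + 2) * (2 * ((n:ℝ) + 2) - 1)) * ‖B (n + 2)‖)
        ≤ 1 := by
      have hBs2 : Summable fun n : ℕ =>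
          (((n:ℝ) + 2) * (2 * ((n:ℝ) + 2) - 1)) * ‖B (n + 2)‖ := by
        have := (summable_nat_add_iff
          (f := fun n : ℕ => (((n:ℝ) + 1) * (2 * ((n:ℝ) + 1) - 1)) * ‖B (n + 1)‖) 1).mpr hgB
        apply this.congr
        intro n
        push_cast
        ring_nf
      rw [← Summable.tsum_add hgA hBs2]
      calc (∑' n : ℕ, ((((n:ℝ) + 2) * (2 * ((n:ℝ) + 2) - 1)) * ‖A (n + 2)‖
            + (((n:ℝ) + 2) * (2 * ((n:ℝ) + 2) - 1)) * ‖B (n + 2)‖))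
          = ∑' n : ℕ, (((n + 2) * (2 * (n + 2) - 1) : ℝ)) * (‖A (n + 2)‖ + ‖B (n + 2)‖) := by
            apply tsum_congr
            intro n
            ring
        _ ≤ 1 := hcoef
    rw [hshift] at t2
    linarith
  refine ⟨sumA, sumB, part3, ?_⟩
  · -- uniform starlikeness
    set cc : ℕ → ℂ := fun n => (((a + n) / (a + 1) : ℝ) : ℂ) * A n with hccdef
    set dd : ℕ → ℂ := fun n => (((a + n) / (a + 1) : ℝ) : ℂ) * B n with hdddef
    have hcc0 : cc 0 = 0 := by rw [hccdef]; simp [hA0]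
    have hdd0 : dd 0 = 0 := by rw [hdddef]; simp [hB0]
    have hdd1 : dd 1 = 0 := by rw [hdddef]; simp [hB1]
    have hcc1 : cc 1 = 1 := by
      rw [hccdef]
      simp only [hA1, mul_one, Nat.cast_one]
      rw [div_self ha1.ne']
      norm_num
    have hccsh : ∀ n : ℕ, cc (n+2) = (((a + (n + 2)) / (a + 1) : ℝ) : ℂ) * A (n + 2) := by
      intro n
      rw [hccdef]
      push_cast
      ring
    have hddsh : ∀ n : ℕ, dd (n+2) = (((a + ((n+1) + 1)) / (a + 1) : ℝ) : ℂ) * B ((n+1) + 1) := by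
      intro n
      rw [hdddef]
      push_cast
      ring
    have hcsM : Summable fun n : ℕ => ((n:ℝ)+2) * ‖cc (n+2)‖ := by
      apply sumA.congr
      intro n
      rw [hccsh n]
    have hdsM : Summable fun n : ℕ => ((n:ℝ)+2) * ‖dd (n+2)‖ := by
      have := (summable_nat_add_iff (f := fun n : ℕ =>
        ((n + 1 : ℝ)) * ‖(((a + (n + 1)) / (a + 1) : ℝ) : ℂ) * B (n + 1)‖) 1).mpr sumB
      apply this.congr
      intro n
      rw [hddsh n]
      push_cast
      ring
    have hSdEq : (∑' n : ℕ, ((n + 1 : ℝ)) * ‖(((a + (n + 1)) / (a + 1) : ℝ) : ℂ) * B (n + 1)‖)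
        = ∑' n : ℕ, ((n:ℝ)+2) * ‖dd (n+2)‖ := by
      rw [Summable.tsum_eq_zero_add sumB]
      have h0 : ((0:ℕ) + 1 : ℝ) * ‖(((a + ((0:ℕ) + 1)) / (a + 1) : ℝ) : ℂ) * B ((0:ℕ) + 1)‖
          = 0 := by
        simp [hB1]
      rw [h0, zero_add]
      apply tsum_congr
      intro n
      rw [hddsh n]
      push_cast
      ring
    have hScEq : (∑' n : ℕ, ((n + 2 : ℝ)) * ‖(((a + (n + 2)) / (a + 1) : ℝ) : ℂ) * A (n + 2)‖)
        = ∑' n : ℕ, ((n:ℝ)+2) * ‖cc (n+2)‖ := by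
      apply tsum_congr
      intro n
      rw [hccsh n]
    have hhalfM : (∑' n : ℕ, ((n:ℝ)+2) * ‖cc (n+2)‖)
        + (∑' n : ℕ, ((n:ℝ)+2) * ‖dd (n+2)‖) ≤ 1/2 := by
      rw [← hScEq, ← hSdEq]
      exact part3
    have starl := master cc dd hcc0 hcc1 hdd0 hdd1 hcsM hdsM hhalfM
    -- summability of coefficient norms
    have hAn : Summable fun n : ℕ => ‖A n‖ := by
      apply norm_all
      apply Summable.of_nonneg_of_le (fun n => norm_nonneg _) _ hsum
      intro n
      nlinarith [norm_nonneg (A (n+2)), norm_nonneg (B (n+2)),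
        (Nat.cast_nonneg n : (0:ℝ) ≤ n),
        mul_nonneg (mul_nonneg (Nat.cast_nonneg n : (0:ℝ) ≤ n)
          (Nat.cast_nonneg n : (0:ℝ) ≤ n)) (norm_nonneg (A (n+2)))]
    have hBn : Summable fun n : ℕ => ‖B n‖ := by
      apply norm_all
      apply Summable.of_nonneg_of_le (fun n => norm_nonneg _) _ hsum
      intro n
      nlinarith [norm_nonneg (A (n+2)), norm_nonneg (B (n+2)),
        (Nat.cast_nonneg n : (0:ℝ) ≤ n),
        mul_nonneg (mul_nonneg (Nat.cast_nonneg n : (0:ℝ) ≤ n)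
          (Nat.cast_nonneg n : (0:ℝ) ≤ n)) (norm_nonneg (B (n+2)))]
    have hnA : Summable fun n : ℕ => (n:ℝ) * ‖A n‖ := by
      apply (summable_nat_add_iff (f := fun n : ℕ => (n:ℝ) * ‖A n‖) 2).mp
      apply Summable.of_nonneg_of_le _ _ hsum
      · intro n
        positivity
      · intro n
        push_cast
        nlinarith [norm_nonneg (A (n+2)), norm_nonneg (B (n+2)),
          (Nat.cast_nonneg n : (0:ℝ) ≤ n),
          mul_nonneg (mul_nonneg (Nat.cast_nonneg n : (0:ℝ) ≤ n)
            (Nat.cast_nonneg n : (0:ℝ) ≤ n)) (norm_nonneg (A (n+2))),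
          mul_nonneg (Nat.cast_nonneg n : (0:ℝ) ≤ n) (norm_nonneg (A (n+2)))]
    have hnB : Summable fun n : ℕ => (n:ℝ) * ‖B n‖ := by
      apply (summable_nat_add_iff (f := fun n : ℕ => (n:ℝ) * ‖B n‖) 2).mp
      apply Summable.of_nonneg_of_le _ _ hsum
      · intro n
        positivity
      · intro n
        push_cast
        nlinarith [norm_nonneg (A (n+2)), norm_nonneg (B (n+2)),
          (Nat.cast_nonneg n : (0:ℝ) ≤ n),
          mul_nonneg (mul_nonneg (Nat.cast_nonneg n : (0:ℝ) ≤ n)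
            (Nat.cast_nonneg n : (0:ℝ) ≤ n)) (norm_nonneg (B (n+2))),
          mul_nonneg (Nat.cast_nonneg n : (0:ℝ) ≤ n) (norm_nonneg (B (n+2)))]
    -- transfer
    have key : ∀ (E : ℕ → ℂ), Summable (fun n : ℕ => ‖E n‖) →
        Summable (fun n : ℕ => (n:ℝ) * ‖E n‖) →
        ∀ z ∈ ball (0:ℂ) 1,
        ((a : ℂ) * (∑' n : ℕ, E n * z ^ n)
          + z * deriv (fun w => ∑' n : ℕ, E n * w ^ n) z) / ((a : ℂ) + 1)
        = ∑' n : ℕ, ((((a + n) / (a + 1) : ℝ)) : ℂ) * E n * z ^ n := by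
      intro E hEn hnE z hzb
      rw [mem_ball_zero_iff] at hzb
      rw [(hasDerivAt_tsum_pow E hEn hzb).deriv]
      have hsz : Summable fun n : ℕ => E n * z ^ n := summable_aux hEn hzb.le
      have hq : Summable fun n : ℕ => (n:ℂ) * E n * z ^ n := by
        apply Summable.of_norm_bounded hnE
        intro n
        rw [norm_mul, norm_mul, norm_pow, Complex.norm_natCast]
        have : ‖z‖ ^ n ≤ 1 := pow_le_one₀ (norm_nonneg z) hzb.le
        nlinarith [mul_nonneg (Nat.cast_nonneg n : (0:ℝ) ≤ n) (norm_nonneg (E n)),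
          mul_nonneg (mul_nonneg (Nat.cast_nonneg n : (0:ℝ) ≤ n) (norm_nonneg (E n)))
            (sub_nonneg.mpr this)]
      have e1 : z * (∑' n : ℕ, ((n:ℂ)+1) * E (n+1) * z ^ n)
          = ∑' n : ℕ, (n:ℂ) * E n * z ^ n := by
        rw [← tsum_mul_left, Summable.tsum_eq_zero_add hq]
        simp only [Nat.cast_zero, zero_mul, zero_add]
        apply tsum_congr
        intro n
        push_cast
        ring
      have e2 : (a:ℂ) * (∑' n : ℕ, E n * z ^ n) = ∑' n : ℕ, (a:ℂ) * (E n * z ^ n) :=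
        tsum_mul_left.symm
      rw [e1, e2]
      have e3 : (∑' n : ℕ, (a:ℂ) * (E n * z ^ n)) + (∑' n : ℕ, (n:ℂ) * E n * z ^ n)
          = ∑' n : ℕ, ((a:ℂ) + n) * E n * z ^ n := by
        rw [← Summable.tsum_add (hsz.mul_left _) hq]
        exact tsum_congr fun n => by ring
      rw [e3, div_eq_mul_inv, mul_comm, ← tsum_mul_left]
      apply tsum_congr
      intro n
      push_cast
      ring
    apply transfer (h' := fun z => ∑' n : ℕ, cc n * z ^ n)
      (g' := fun z => ∑' n : ℕ, dd n * z ^ n)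
    · intro z hzb
      rw [key A hAn hnA z hzb, hccdef]
    · intro z hzb
      rw [key B hBn hnB z hzb, hdddef]
    · exact starl
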